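/- Let p be a prime and a an almost p-ary sequence of period n + s with exactly s zero-symbols (s ≥ 1) which is a nearly perfect sequence of type γ with 0 < |γ| < n. Let q ≠ p be a prime with q^r exactly dividing (γ+1)n + (s-1)γ, and suppose q is self-conjugate modulo up for some divisor u ≥ 1 of n+s with q ∤ u. Then r is even. -/

import Mathlib

open Polynomial Finset

-- aux 1: u - v ∣ f.comp u - f.comp v
lemma aux_dvd_comp_sub {R : Type*} [CommRing R] (f u v : R[X]) :
    (u - v) ∣ f.comp u - f.comp v := by
  induction f using Polynomial.induction_on' with
  | add p q hp hq =>
    simp only [add_comp]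
    have : p.comp u + q.comp u - (p.comp v + q.comp v)
        = (p.comp u - p.comp v) + (q.comp u - q.comp v) := by ring
    rw [this]; exact dvd_add hp hq
  | monomial n a =>
    simp only [monomial_comp]
    have : C a * u ^ n - C a * v ^ n = C a * (u ^ n - v ^ n) := by ring
    rw [this]
    exact Dvd.dvd.mul_left (sub_dvd_pow_sub_pow u v n) _

-- aux 2: Frobenius for comp over ZMod q
lemma aux_comp_pow {q : ℕ} [Fact q.Prime] (f : (ZMod q)[X]) (j : ℕ) :
    f.comp (X ^ q ^ j) = f ^ q ^ j := by
  have hfrob : ∀ g : (ZMod q)[X], g.map (frobenius (ZMod q) q) = g := by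
    intro g; ext i; simp [coeff_map, frobenius_def, ZMod.pow_card]
  have hbase : ∀ g : (ZMod q)[X], g.comp (X ^ q) = g ^ q := by
    intro g
    have := Polynomial.map_frobenius_expand q g  -- hopefully right name/shape
    rw [hfrob] at this
    rw [← this, Polynomial.expand_eq_comp_X_pow]
  induction j with
  | zero => simp
  | succ j ih =>
    have h1 : (X : (ZMod q)[X]) ^ q ^ (j+1) = ((X : (ZMod q)[X]) ^ q ^ j).comp (X ^ q) := by
      rw [Polynomial.pow_comp, Polynomial.X_comp]  -- wrong? X^ q^j comp X^q = (X^q)^{q^j}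
      rw [← pow_mul, pow_succ]
      ring_nf
    rw [h1, ← Polynomial.comp_assoc, ih, Polynomial.pow_comp, hbase, ← pow_mul, pow_succ, mul_comm]

lemma aux_key (p q : ℕ) (hp : p.Prime) (hq : q.Prime) (hqp : ¬ q ∣ p)
    (ζ : ℂ) (hζ : IsPrimitiveRoot ζ p) (j : ℕ) (hpj : p ∣ q ^ j + 1)
    (c : ℤ) (hc : ¬ (q : ℤ) ∣ c) :
    ∀ r : ℕ, ∀ P : ℤ[X],
      (cyclotomic p ℤ ∣ P * P.comp (X ^ (p - 1)) - C ((q : ℤ) ^ r * c)) → Even r := by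
  haveI : Fact q.Prime := ⟨hq⟩
  have hζint : IsIntegral ℤ ζ := hζ.isIntegral hp.pos
  have hζ' : IsPrimitiveRoot (ζ ^ (p - 1)) p := by
    refine hζ.pow_of_coprime (p - 1) ?_
    obtain ⟨k, rfl⟩ := Nat.exists_eq_succ_of_ne_zero hp.pos.ne'
    simpa using (Nat.coprime_succ_self k).symm
  have hζ'int : IsIntegral ℤ (ζ ^ (p - 1)) := hζ'.isIntegral hp.pos
  have haΦ : aeval ζ (cyclotomic p ℤ) = 0 := by
    rw [cyclotomic_eq_minpoly hζ hp.pos]; exact minpoly.aeval ℤ ζ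
  have haΦ' : aeval (ζ ^ (p - 1)) (cyclotomic p ℤ) = 0 := by
    rw [cyclotomic_eq_minpoly hζ' hp.pos]; exact minpoly.aeval ℤ _
  -- integrality of aeval values
  have hint : ∀ g : ℤ[X], IsIntegral ℤ (aeval ζ g) := by
    intro g
    induction g using Polynomial.induction_on' with
    | add u v hu hv => simpa [map_add] using hu.add hv
    | monomial n a =>
      simp only [aeval_monomial]
      exact (isIntegral_algebraMap).mul (hζint.pow n)
  intro r
  induction r using Nat.strong_induction_on with
  | _ r IH =>
    intro P hdvd
    rcases r with - | r
    · exact Even.zero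
    -- r ≥ 1 : reduce
    have hev0 : aeval ζ (P * P.comp (X ^ (p - 1)) - C ((q : ℤ) ^ (r+1) * c)) = 0 := by
      obtain ⟨h, hh⟩ := hdvd
      rw [hh, map_mul, haΦ, zero_mul]
    have hz : aeval ζ P * aeval (ζ ^ (p-1)) P = ((q : ℤ) ^ (r+1) * c : ℤ) := by
      have := hev0
      rw [map_sub, map_mul, aeval_comp, aeval_C, sub_eq_zero] at this
      simpa [aeval_X_pow] using this
    -- mod q : cyclotomic p (ZMod q) divides image
    set f : ℤ →+* ZMod q := Int.castRingHom (ZMod q)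
    set Pb : (ZMod q)[X] := P.map f with hPb
    have hmap : cyclotomic p (ZMod q) ∣ Pb * Pb.comp (X ^ (p - 1)) := by
      have h1 := Polynomial.map_dvd f hdvd
      rw [map_cyclotomic] at h1
      have h2 : (P * P.comp (X ^ (p - 1)) - C ((q : ℤ) ^ (r+1) * c)).map f
          = Pb * Pb.comp (X ^ (p - 1)) := by
        rw [Polynomial.map_sub, Polynomial.map_mul, Polynomial.map_comp, Polynomial.map_C,
          Polynomial.map_pow, Polynomial.map_X]
        have : f ((q : ℤ) ^ (r+1) * c) = 0 := by
          simp [f, ZMod.natCast_self]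
        rw [this, map_zero, sub_zero]
      rwa [h2] at h1
    -- X^p - 1 squarefree over ZMod q
    have hpK : ((p : ZMod q)) ≠ 0 := by
      simpa [ZMod.natCast_eq_zero_iff] using hqp
    have hsqf : Squarefree ((X : (ZMod q)[X]) ^ p - 1) := by
      have := (Polynomial.separable_X_pow_sub_C (1 : ZMod q) hpK one_ne_zero).squarefree
      simpa using this
    have hcyc_dvd : cyclotomic p (ZMod q) ∣ (X : (ZMod q)[X]) ^ p - 1 :=
      cyclotomic.dvd_X_pow_sub_one p (ZMod q)
    have hsqf' : Squarefree (cyclotomic p (ZMod q)) := hsqf.squarefree_of_dvd hcyc_dvd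
    -- congruence : Pb.comp (X^(p-1)) ≡ Pb ^ (q^j) mod (X^p - 1)
    have hcong : ((X : (ZMod q)[X]) ^ p - 1) ∣ Pb.comp (X ^ (p - 1)) - Pb ^ q ^ j := by
      obtain ⟨t0, ht⟩ := hpj
      obtain ⟨t, rfl⟩ : ∃ t, t0 = t + 1 := by
        rcases t0 with - | t
        · exfalso; have := pow_pos hq.pos j; omega
        · exact ⟨t, rfl⟩
      have hqj : q ^ j = (p - 1) + p * t := by
        have h2le := hp.two_le
        have hmul : p * (t + 1) = p * t + p := by ring
        omega
      have hXdvd : ((X : (ZMod q)[X]) ^ p - 1) ∣ (X ^ q ^ j - X ^ (p - 1)) := by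
        have : (X : (ZMod q)[X]) ^ q ^ j - X ^ (p - 1)
            = X ^ (p - 1) * (((X : (ZMod q)[X]) ^ p) ^ t - 1 ^ t) := by
          rw [mul_sub, ← pow_mul, ← pow_add, hqj, one_pow, mul_one]
        rw [this]
        exact Dvd.dvd.mul_left (sub_dvd_pow_sub_pow _ 1 t) _
      have h2 := (hXdvd.trans (aux_dvd_comp_sub Pb (X ^ q ^ j) (X ^ (p - 1))))
      rw [aux_comp_pow] at h2
      have : Pb.comp (X ^ (p - 1)) - Pb ^ q ^ j
          = -(Pb ^ q ^ j - Pb.comp (X ^ (p-1))) := by ring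
      rw [this]
      exact dvd_neg.mpr h2
    have hfP : cyclotomic p (ZMod q) ∣ Pb := by
      have h1 : cyclotomic p (ZMod q) ∣ Pb ^ (q ^ j + 1) := by
        have h2 : cyclotomic p (ZMod q) ∣ Pb * (Pb.comp (X ^ (p - 1)) - Pb ^ q ^ j) :=
          (hcyc_dvd.trans hcong).mul_left Pb
        have h3 : Pb ^ (q ^ j + 1)
            = Pb * Pb.comp (X ^ (p - 1)) - Pb * (Pb.comp (X ^ (p - 1)) - Pb ^ q ^ j) := by
          ring
        rw [h3]
        exact dvd_sub hmap h2
      exact (hsqf'.dvd_pow_iff_dvd (Nat.succ_ne_zero _)).mp h1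
    -- lift to ℤ: P = cyclotomic * G + q * P₁
    obtain ⟨g1, hg1⟩ := hfP
    obtain ⟨G, hG⟩ := Polynomial.map_surjective f ZMod.intCast_surjective g1
    have hDmap : (P - cyclotomic p ℤ * G).map f = 0 := by
      rw [Polynomial.map_sub, Polynomial.map_mul, map_cyclotomic, hG, ← hg1, hPb, sub_self]
    have hqdvd : C (q : ℤ) ∣ P - cyclotomic p ℤ * G := by
      rw [Polynomial.C_dvd_iff_dvd_coeff]
      intro i
      have h7 : (map f (P - cyclotomic p ℤ * G)).coeff i = 0 := by rw [hDmap]; simp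
      rw [Polynomial.coeff_map] at h7
      have h8 := (ZMod.intCast_zmod_eq_zero_iff_dvd ((P - cyclotomic p ℤ * G).coeff i) q).mp
        (by simpa [f] using h7)
      exact_mod_cast h8
    obtain ⟨P₁, hP₁⟩ := hqdvd
    have hPdec : P = cyclotomic p ℤ * G + C (q : ℤ) * P₁ := by linear_combination hP₁
    -- evaluate
    have hzP : aeval ζ P = (q : ℂ) * aeval ζ P₁ := by
      rw [hPdec, map_add, map_mul, haΦ, zero_mul, zero_add, map_mul, aeval_C]
      push_cast; ring
    have hzP' : aeval (ζ ^ (p-1)) P = (q : ℂ) * aeval (ζ ^ (p-1)) P₁ := by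
      rw [hPdec, map_add, map_mul, haΦ', zero_mul, zero_add, map_mul, aeval_C]
      push_cast; ring
    set w : ℂ := aeval ζ P₁ * aeval (ζ ^ (p-1)) P₁ with hw
    have hqw : (q : ℂ) ^ 2 * w = ((q : ℤ) ^ (r+1) * c : ℤ) := by
      rw [hw, ← hz, hzP, hzP']; ring
    -- w is an integer
    have hwint : IsIntegral ℤ w := by
      have h5 : aeval (ζ ^ (p-1)) P₁ = aeval ζ (P₁.comp (X ^ (p-1))) := by
        rw [aeval_comp, aeval_X_pow]
      rw [hw, h5]
      exact (hint P₁).mul (hint _)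
    have hq0 : (q : ℂ) ≠ 0 := by exact_mod_cast hq.pos.ne'
    have hwrat : w = algebraMap ℚ ℂ ((q : ℚ) ^ (r+1) * c / (q : ℚ) ^ 2) := by
      have : ((q : ℤ) ^ (r+1) * c : ℤ) = ((q:ℂ)^(r+1) * c) := by push_cast; ring
      rw [this] at hqw
      field_simp
      rw [map_div₀]; push_cast; rw [eq_div_iff (pow_ne_zero 2 hq0), mul_comm, hqw]; simp
    have hxint : IsIntegral ℤ ((q : ℚ) ^ (r+1) * c / (q : ℚ) ^ 2) := by
      rw [hwrat] at hwint
      exact (isIntegral_algebraMap_iff (algebraMap ℚ ℂ).injective).mp hwint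
    obtain ⟨e, he⟩ := IsIntegrallyClosed.isIntegral_iff.mp hxint
    have heq : (q : ℤ) ^ 2 * e = (q : ℤ) ^ (r+1) * c := by
      have hq0' : (q : ℚ) ≠ 0 := by exact_mod_cast hq.pos.ne'
      have : ((q:ℚ))^2 * (e : ℚ) = (q:ℚ)^(r+1) * c := by
        rw [show ((e : ℚ)) = algebraMap ℤ ℚ e from rfl, he]; field_simp
      exact_mod_cast this
    rcases r with - | r
    · -- r+1 = 1 : contradiction
      exfalso
      apply hc
      have : (q : ℤ) * ((q:ℤ) * e) = (q:ℤ) * c := by linear_combination heq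
      have h6 : (q : ℤ) * e = c := by
        have hq0' : (q : ℤ) ≠ 0 := by exact_mod_cast hq.pos.ne'
        exact mul_left_cancel₀ hq0' this
      exact ⟨e, h6.symm⟩
    · -- r+2 : descend
      have he2 : e = (q : ℤ) ^ r * c := by
        have hq0' : (q : ℤ) ^ 2 ≠ 0 := pow_ne_zero _ (by exact_mod_cast hq.pos.ne')
        apply mul_left_cancel₀ hq0'
        rw [heq]; ring
      have hwe : w = (q : ℂ) ^ r * (c : ℂ) := by
        have h9 : (q:ℂ)^2 * w = (q:ℂ)^2 * ((q:ℂ)^r * (c:ℂ)) := by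
          rw [hqw]; push_cast; ring
        exact mul_left_cancel₀ (pow_ne_zero 2 hq0) h9
      have hdvd1 : cyclotomic p ℤ ∣ P₁ * P₁.comp (X ^ (p - 1)) - C ((q : ℤ) ^ r * c) := by
        rw [cyclotomic_eq_minpoly hζ hp.pos]
        apply minpoly.isIntegrallyClosed_dvd hζint
        rw [map_sub, map_mul, aeval_comp, aeval_C, aeval_X_pow, ← hw, hwe]
        push_cast
        ring_nf
        simp
      obtain ⟨k, hk⟩ : Even r := IH r (by omega) P₁ hdvd1
      exact ⟨k + 1, by omega⟩

theorem stmt_18 (p : ℕ) (hp : p.Prime) (n s : ℕ) (hs : 1 ≤ s) [NeZero (n + s)]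
    (γ : ℤ) (hγ0 : 0 < |γ|) (hγn : |γ| < (n : ℤ))
    (ζ : ℂ) (hζ : IsPrimitiveRoot ζ p)
    (a : ZMod (n + s) → ℂ) (Z : Finset (ZMod (n + s))) (hZcard : Z.card = s)
    (hzero : ∀ i ∈ Z, a i = 0) (hroot : ∀ i ∉ Z, ∃ k : ℕ, a i = ζ ^ k)
    (hnps : ∀ t : ZMod (n + s), t ≠ 0 →
      ∑ i : ZMod (n + s), a i * (starRingEnd ℂ) (a (i + t)) = γ)
    (q r : ℕ) (hq : q.Prime) (hqp : q ≠ p)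
    (hqr : (q : ℤ) ^ r ∣ (γ + 1) * (n : ℤ) + ((s : ℤ) - 1) * γ)
    (hqr1 : ¬ (q : ℤ) ^ (r + 1) ∣ (γ + 1) * (n : ℤ) + ((s : ℤ) - 1) * γ)
    (u : ℕ) (hu : u ∣ n + s) (hu1 : 1 ≤ u) (hqu : ¬ q ∣ u)
    (j : ℕ)
    (hsc : (q : ZMod ((u * p) / q ^ ((u * p).factorization q))) ^ j = -1) :
    Even r := by
  classical
  have hNpos : 0 < n + s := Nat.pos_of_ne_zero (NeZero.ne _)
  -- basic facts about ζ
  have hζp : ζ ^ p = 1 := hζ.pow_eq_one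
  have hζ0 : ζ ≠ 0 := by
    intro h; rw [h, zero_pow hp.pos.ne'] at hζp; exact zero_ne_one hζp
  have habs : ‖ζ‖ = 1 := Complex.norm_eq_one_of_pow_eq_one hζp hp.pos.ne'
  have hmulconj : ζ * (starRingEnd ℂ) ζ = 1 := by
    rw [Complex.mul_conj]
    rw [Complex.normSq_eq_norm_sq, habs]; norm_num
  have hpowp : ζ * ζ ^ (p - 1) = 1 := by
    rw [← pow_succ']
    have : p - 1 + 1 = p := Nat.succ_pred_eq_of_pos hp.pos
    rw [this, hζp]
  have hconj : (starRingEnd ℂ) ζ = ζ ^ (p - 1) :=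
    mul_left_cancel₀ hζ0 (hmulconj.trans hpowp.symm)
  -- the chosen exponents
  have hch : ∀ i : ZMod (n + s), ∃ k : ℕ, i ∉ Z → a i = ζ ^ k := by
    intro i
    by_cases h : i ∈ Z
    · exact ⟨0, fun h' => absurd h h'⟩
    · obtain ⟨k, hk⟩ := hroot i h; exact ⟨k, fun _ => hk⟩
  choose k hk using hch
  -- z and its square norm
  set z : ℂ := ∑ i : ZMod (n + s), a i with hz
  have hzdiff : z = ∑ i ∈ univ \ Z, a i := by
    rw [hz]
    refine (Finset.sum_subset (Finset.subset_univ _) ?_).symm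
    intro x _ hx
    simp only [Finset.mem_sdiff, Finset.mem_univ, true_and, not_not] at hx
    exact hzero x hx
  have hcard_diff : (univ \ Z).card = n := by
    rw [Finset.card_sdiff_of_subset (Finset.subset_univ _), Finset.card_univ, ZMod.card, hZcard]
    omega
  have hC0 : ∑ i : ZMod (n + s), a i * (starRingEnd ℂ) (a i) = (n : ℂ) := by
    have h1 : ∑ i : ZMod (n + s), a i * (starRingEnd ℂ) (a i)
        = ∑ i ∈ univ \ Z, a i * (starRingEnd ℂ) (a i) := by
      refine (Finset.sum_subset (Finset.subset_univ _) ?_).symm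
      intro x _ hx
      simp only [Finset.mem_sdiff, Finset.mem_univ, true_and, not_not] at hx
      rw [hzero x hx, zero_mul]
    rw [h1]
    have h2 : ∀ i ∈ univ \ Z, a i * (starRingEnd ℂ) (a i) = 1 := by
      intro i hi
      rw [Finset.mem_sdiff] at hi
      rw [hk i hi.2, map_pow, ← mul_pow, hmulconj, one_pow]
    rw [Finset.sum_congr rfl h2, Finset.sum_const, hcard_diff]
    simp
  -- total sum identity
  have htot : ∑ t : ZMod (n + s), ∑ i : ZMod (n + s), a i * (starRingEnd ℂ) (a (i + t))
      = z * (starRingEnd ℂ) z := by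
    rw [Finset.sum_comm]
    have h3 : ∀ i : ZMod (n + s), ∑ t : ZMod (n + s), a (i + t) = z := by
      intro i
      exact Fintype.sum_equiv (Equiv.addLeft i) _ _ (fun t => rfl)
    calc ∑ i : ZMod (n+s), ∑ t : ZMod (n+s), a i * (starRingEnd ℂ) (a (i + t))
        = ∑ i : ZMod (n+s), a i * (starRingEnd ℂ) (∑ t : ZMod (n+s), a (i + t)) := by
          refine Finset.sum_congr rfl fun i _ => ?_
          rw [map_sum, Finset.mul_sum]
      _ = ∑ i : ZMod (n+s), a i * (starRingEnd ℂ) z := by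
          refine Finset.sum_congr rfl fun i _ => ?_
          rw [h3 i]
      _ = z * (starRingEnd ℂ) z := by rw [← Finset.sum_mul]
  have hsplit : z * (starRingEnd ℂ) z
      = (n : ℂ) + ((n + s - 1 : ℕ) : ℂ) * (γ : ℂ) := by
    rw [← htot]
    rw [← Finset.add_sum_erase _ _ (Finset.mem_univ (0 : ZMod (n + s)))]
    congr 1
    · simpa using hC0
    · have h4 : ∀ t ∈ univ.erase (0 : ZMod (n + s)),
          ∑ i : ZMod (n + s), a i * (starRingEnd ℂ) (a (i + t)) = (γ : ℂ) := by
        intro t ht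
        exact hnps t (Finset.mem_erase.mp ht).1
      rw [Finset.sum_congr rfl h4, Finset.sum_const,
        Finset.card_erase_of_mem (Finset.mem_univ _), Finset.card_univ, ZMod.card]
      simp [nsmul_eq_mul]
  -- the integer m and c
  set m : ℤ := (γ + 1) * (n : ℤ) + ((s : ℤ) - 1) * γ with hm
  have hmz : z * (starRingEnd ℂ) z = (m : ℂ) := by
    rw [hsplit, hm]
    have : ((n + s - 1 : ℕ) : ℂ) = (n : ℂ) + (s : ℂ) - 1 := by
      push_cast [Nat.cast_sub (by omega : 1 ≤ n + s)]
      ring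
    rw [this]
    push_cast
    ring
  set c : ℤ := m / (q : ℤ) ^ r with hcdef
  have hmc : m = (q : ℤ) ^ r * c := (Int.mul_ediv_cancel' hqr).symm
  have hc : ¬ (q : ℤ) ∣ c := by
    rintro ⟨d, hd⟩
    exact hqr1 ⟨d, by rw [hmc, hd]; ring⟩
  -- polynomial P
  set P : ℤ[X] := ∑ i ∈ univ \ Z, (X : ℤ[X]) ^ (k i) with hP
  have hζint : IsIntegral ℤ ζ := hζ.isIntegral hp.pos
  have haP : aeval ζ P = z := by
    rw [hP, map_sum, hzdiff]
    refine Finset.sum_congr rfl fun i hi => ?_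
    rw [Finset.mem_sdiff] at hi
    rw [aeval_X_pow, hk i hi.2]
  have haPc : aeval ζ (P.comp (X ^ (p - 1))) = (starRingEnd ℂ) z := by
    rw [aeval_comp, aeval_X_pow, hP, map_sum, hzdiff, map_sum]
    refine Finset.sum_congr rfl fun i hi => ?_
    rw [Finset.mem_sdiff] at hi
    rw [aeval_X_pow, hk i hi.2, map_pow, hconj]
  have hdvd2 : cyclotomic p ℤ ∣ P * P.comp (X ^ (p - 1)) - C ((q : ℤ) ^ r * c) := by
    rw [cyclotomic_eq_minpoly hζ hp.pos]
    apply minpoly.isIntegrallyClosed_dvd hζint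
    rw [map_sub, map_mul, haP, haPc, aeval_C, ← hmc]
    rw [show (algebraMap ℤ ℂ) m = (m : ℂ) from rfl, hmz, sub_self]
  -- self-conjugacy modulo p
  have hqdp : ¬ q ∣ p := by
    intro h
    exact hqp ((Nat.prime_dvd_prime_iff_eq hq hp).mp h)
  have hupq : ¬ q ∣ u * p := by
    intro h
    rcases (Nat.Prime.dvd_mul hq).mp h with h' | h'
    · exact hqu h'
    · exact hqdp h'
  have hfac : (u * p).factorization q = 0 := Nat.factorization_eq_zero_of_not_dvd hupq
  rw [hfac, pow_zero, Nat.div_one] at hsc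
  have hscp : (q : ZMod p) ^ j = -1 := by
    have h5 := congrArg (ZMod.castHom (dvd_mul_left p u) (ZMod p)) hsc
    rw [map_pow, map_natCast, map_neg, map_one] at h5
    exact h5
  have hpj : p ∣ q ^ j + 1 := by
    have h6 : ((q ^ j + 1 : ℕ) : ZMod p) = 0 := by
      push_cast
      rw [hscp]; ring
    exact (ZMod.natCast_eq_zero_iff _ _).mp h6
  exact aux_key p q hp hq hqdp ζ hζ j hpj c hc r P hdvd2
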